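/- Let p be a prime and a, b positive integers with b > 1, and suppose k = (p^{ab} − 1)/(b(p^a − 1)) is an integer. Let ω be a primitive element of F_{p^{ab}} and for α ∈ F_{p^{ab}} let [α] = ([α]_1, …, [α]_b) ∈ (F_{p^a})^b be the coordinate vector of α with respect to the F_{p^a}-basis {1, ω^k, ω^{2k}, …, ω^{(b−1)k}} of F_{p^{ab}}. Then for each positive integer r, the number N_r of solutions (x_1, …, x_r) ∈ (F_{p^{ab}}^*)^r of x_1^k + ⋯ + x_r^k = α equals k^r times Σ over all b-tuples (r_1, …, r_b) of nonnegative integers with r_1 + ⋯ + r_b = r of the multinomial coefficient r!/(r_1!⋯r_b!) times the product over i = 1, …, b of a_i(α), where a_i(α) = ((p^a − 1)/p^a)·((p^a − 1)^{r_i − 1} − (−1)^{r_i − 1}) if [α]_i = 0, and a_i(α) = (1/p^a)·((p^a − 1)^{r_i} − (−1)^{r_i}) if [α]_i ≠ 0. -/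

import Mathlib

open Finset

/-- The closed formula for the number of walks of length `s` between two
(equal or distinct, according to `same`) vertices of the complete graph `K_q`:
`((q-1)/q)·((q-1)^{s-1} - (-1)^{s-1})` in the equal case (interpreted as `1`
when `s = 0`) and `(1/q)·((q-1)^s - (-1)^s)` in the distinct case. -/
def aFactor (q s : ℕ) (same : Prop) [Decidable same] : ℚ :=
  if same then
    if s = 0 then 1
    else ((q : ℚ) - 1) / (q : ℚ) * (((q : ℚ) - 1) ^ (s - 1) - (-1 : ℚ) ^ (s - 1))
  else (1 / (q : ℚ)) * (((q : ℚ) - 1) ^ s - (-1 : ℚ) ^ s)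

section AuxCombinatorics

lemma sum_update_pred {b : ℕ} (c : Fin b → ℕ) (x : Fin b) (hx : c x ≠ 0) :
    ∑ i, Function.update c x (c x - 1) i = (∑ i, c i) - 1 := by
  rw [Finset.sum_update_of_mem (mem_univ x), Finset.sdiff_singleton_eq_erase]
  have h2 : c x + ∑ i ∈ univ.erase x, c i = ∑ i, c i :=
    Finset.add_sum_erase univ c (mem_univ x)
  omega

lemma mul_claim {b : ℕ} (c : Fin b → ℕ) (x : Fin b) (hx : c x ≠ 0) :
    (∑ i, c i) * Nat.multinomial univ (Function.update c x (c x - 1))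
      = c x * Nat.multinomial univ c := by
  set c' := Function.update c x (c x - 1) with hc'
  have hsum : ∑ i, c' i = (∑ i, c i) - 1 := sum_update_pred c x hx
  have hspos : 0 < ∑ i, c i := by
    have : c x ≤ ∑ i, c i := Finset.single_le_sum (fun i _ => Nat.zero_le _) (mem_univ x)
    omega
  have hP'pos : 0 < ∏ i, (c' i).factorial :=
    Finset.prod_pos fun i _ => Nat.factorial_pos _
  apply Nat.eq_of_mul_eq_mul_left hP'pos
  have hPP' : c x * ∏ i, (c' i).factorial = ∏ i, (c i).factorial := by
    rw [← Finset.mul_prod_erase univ (fun i => (c' i).factorial) (mem_univ x),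
        ← Finset.mul_prod_erase univ (fun i => (c i).factorial) (mem_univ x)]
    have he : ∏ i ∈ univ.erase x, (c' i).factorial = ∏ i ∈ univ.erase x, (c i).factorial :=
      Finset.prod_congr rfl fun i hi => by
        rw [hc', Function.update_of_ne (Finset.ne_of_mem_erase hi)]
    rw [he, ← mul_assoc]
    congr 1
    have : c' x = c x - 1 := Function.update_self _ _ _
    rw [this, Nat.mul_factorial_pred hx]
  calc (∏ i, (c' i).factorial) * ((∑ i, c i) * Nat.multinomial univ c')
      = (∑ i, c i) * ((∏ i, (c' i).factorial) * Nat.multinomial univ c') := by ring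
    _ = (∑ i, c i) * ((∑ i, c' i).factorial) := by rw [Nat.multinomial_spec]
    _ = (∑ i, c i).factorial := by
        rw [hsum, Nat.mul_factorial_pred hspos.ne']
    _ = (∏ i, (c i).factorial) * Nat.multinomial univ c := (Nat.multinomial_spec _ _).symm
    _ = (c x * ∏ i, (c' i).factorial) * Nat.multinomial univ c := by rw [hPP']
    _ = (∏ i, (c' i).factorial) * (c x * Nat.multinomial univ c) := by ring

lemma multinomial_pascal {b : ℕ} (c : Fin b → ℕ) (h0 : ∑ i, c i ≠ 0) :
    Nat.multinomial univ c
      = ∑ x, if c x = 0 then 0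
          else Nat.multinomial univ (Function.update c x (c x - 1)) := by
  apply Nat.eq_of_mul_eq_mul_left (Nat.pos_of_ne_zero h0)
  rw [Finset.mul_sum]
  have : ∀ x : Fin b,
      (∑ i, c i) * (if c x = 0 then 0
        else Nat.multinomial univ (Function.update c x (c x - 1)))
      = c x * Nat.multinomial univ c := by
    intro x
    by_cases hx : c x = 0
    · simp [hx]
    · rw [if_neg hx, mul_claim c x hx]
  rw [Finset.sum_congr rfl fun x _ => this x, ← Finset.sum_mul]

lemma fib_cons {r b : ℕ} (f : Fin (r + 1) → Fin b) (i : Fin b) :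
    #(univ.filter fun j => f j = i)
      = (if f 0 = i then 1 else 0) + #(univ.filter fun j => f (Fin.succ j) = i) := by
  rw [Finset.card_filter, Finset.card_filter, Fin.sum_univ_succ]

lemma card_fibfun {b : ℕ} : ∀ (r : ℕ) (c : Fin b → ℕ), (∑ i, c i = r) →
    Fintype.card {f : Fin r → Fin b // ∀ i, #(univ.filter fun j => f j = i) = c i}
      = Nat.multinomial univ c := by
  intro r
  induction r with
  | zero =>
    intro c hc
    have hc0 : ∀ i, c i = 0 := by
      intro i
      exact Finset.sum_eq_zero_iff.mp hc i (mem_univ i)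
    have h1 : Nat.multinomial univ c = 1 := by
      have := Nat.multinomial_spec (univ : Finset (Fin b)) c
      simp only [hc0] at this ⊢
      simpa using this
    rw [h1]
    rw [Fintype.card_eq_one_iff]
    refine ⟨⟨fun j => j.elim0, fun i => by simp [hc0]⟩, ?_⟩
    rintro ⟨g, hg⟩
    apply Subtype.ext
    funext j
    exact j.elim0
  | succ r ih =>
    intro c hc
    have E : {f : Fin (r+1) → Fin b // ∀ i, #(univ.filter fun j => f j = i) = c i}
        ≃ Σ x : Fin b, {g : Fin r → Fin b //
            ∀ i, (if x = i then 1 else 0) + #(univ.filter fun j => g j = i) = c i} := by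
      refine ⟨fun f => ⟨f.1 0, fun j => f.1 j.succ, fun i => ?_⟩,
              fun s => ⟨Fin.cons s.1 s.2.1, fun i => ?_⟩, ?_, ?_⟩
      · rw [← f.2 i, fib_cons]
      · rw [fib_cons]
        simp only [Fin.cons_zero, Fin.cons_succ]
        exact s.2.2 i
      · rintro ⟨f, hf⟩
        apply Subtype.ext
        exact Fin.cons_self_tail f
      · rintro ⟨x, g, hg⟩
        rfl
    rw [Fintype.card_congr E, Fintype.card_sigma]
    have hterm : ∀ x : Fin b,
        Fintype.card {g : Fin r → Fin b //
            ∀ i, (if x = i then 1 else 0) + #(univ.filter fun j => g j = i) = c i}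
        = if c x = 0 then 0 else Nat.multinomial univ (Function.update c x (c x - 1)) := by
      intro x
      by_cases hx : c x = 0
      · rw [if_pos hx, Fintype.card_eq_zero_iff]
        refine ⟨fun g => ?_⟩
        have := g.2 x
        rw [if_pos rfl, hx] at this
        omega
      · rw [if_neg hx]
        have hiff : ∀ g : Fin r → Fin b,
            (∀ i, (if x = i then 1 else 0) + #(univ.filter fun j => g j = i) = c i)
            ↔ (∀ i, #(univ.filter fun j => g j = i) = Function.update c x (c x - 1) i) := by
          intro g
          constructor
          · intro h i
            by_cases hix : i = x
            · subst hix
              have := h i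
              rw [if_pos rfl] at this
              rw [Function.update_self]
              omega
            · rw [Function.update_of_ne hix]
              have := h i
              rwa [if_neg (fun hh => hix hh.symm), zero_add] at this
          · intro h i
            by_cases hix : i = x
            · subst hix
              rw [if_pos rfl, h i, Function.update_self]
              omega
            · rw [if_neg (fun hh => hix hh.symm), zero_add, h i,
                Function.update_of_ne hix]
        rw [Fintype.card_congr (Equiv.subtypeEquivRight hiff)]
        exact ih _ (by rw [sum_update_pred c x hx, hc]; rfl)
    rw [Finset.sum_congr rfl fun x _ => hterm x]
    exact (multinomial_pascal c (by omega)).symm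

end AuxCombinatorics

section AuxFieldCount

variable (K : Type*) [Field K] [Fintype K] [DecidableEq K]

def sumCount (s : ℕ) (β : K) : ℕ :=
  Fintype.card {d : Fin s → Kˣ // ∑ i, ((d i : K)) = β}

lemma sumCount_zero (β : K) : sumCount K 0 β = if β = 0 then 1 else 0 := by
  by_cases h : β = 0
  · subst h
    rw [if_pos rfl, sumCount, Fintype.card_eq_one_iff]
    exact ⟨⟨fun j => j.elim0, by simp⟩, fun g => Subtype.ext (funext fun j => j.elim0)⟩
  · rw [if_neg h, sumCount, Fintype.card_eq_zero_iff]
    exact ⟨fun d => h (by simpa using d.2.symm)⟩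

lemma sumCount_succ (s : ℕ) (β : K) :
    sumCount K (s + 1) β = ∑ u : Kˣ, sumCount K s (β - u) := by
  simp only [sumCount]
  rw [← Fintype.card_sigma]
  apply Fintype.card_congr
  refine ⟨fun d => ⟨d.1 0, ⟨fun i => d.1 i.succ, ?_⟩⟩, fun t => ⟨Fin.cons t.1 t.2.1, ?_⟩,
    ?_, ?_⟩
  · have := d.2
    rw [Fin.sum_univ_succ] at this
    linear_combination this
  · rw [Fin.sum_univ_succ]
    simp only [Fin.cons_zero, Fin.cons_succ]
    rw [t.2.2]
    ring
  · rintro ⟨d, hd⟩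
    apply Subtype.ext
    exact Fin.cons_self_tail d
  · rintro ⟨x, d, hd⟩
    rfl

lemma sumCount_cast (s : ℕ) (β : K) :
    (sumCount K s β : ℚ)
      = if β = 0
        then (((Fintype.card K : ℚ) - 1) ^ s + (-1) ^ s * ((Fintype.card K : ℚ) - 1))
              / (Fintype.card K : ℚ)
        else (((Fintype.card K : ℚ) - 1) ^ s - (-1) ^ s) / (Fintype.card K : ℚ) := by
  have hq2 : 2 ≤ Fintype.card K := Fintype.one_lt_card
  have hq0 : (Fintype.card K : ℚ) ≠ 0 := by positivity
  have hcu : (Fintype.card Kˣ : ℚ) = (Fintype.card K : ℚ) - 1 := by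
    rw [Fintype.card_units]
    push_cast [Nat.cast_sub (by omega : 1 ≤ Fintype.card K)]
    ring
  induction s generalizing β with
  | zero =>
    rw [sumCount_zero]
    by_cases h : β = 0
    · rw [if_pos h, if_pos h]
      push_cast
      field_simp
      ring
    · rw [if_neg h, if_neg h]
      push_cast
      ring
  | succ s ih =>
    rw [sumCount_succ]
    push_cast
    simp only [ih]
    by_cases h : β = 0
    · subst h
      rw [if_pos rfl]
      have hne : ∀ u : Kˣ, ¬((0 : K) - u = 0) := by
        intro u hu
        exact u.ne_zero (by linear_combination -hu)
      rw [Finset.sum_congr rfl fun u _ => if_neg (hne u)]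
      rw [Finset.sum_const, card_univ, nsmul_eq_mul, hcu]
      field_simp
      ring
    · rw [if_neg h]
      have key : ∀ u : Kˣ, (β - u = 0) ↔ u = Units.mk0 β h := by
        intro u
        rw [sub_eq_zero, Units.ext_iff]
        simp [eq_comm]
      set A := (((Fintype.card K : ℚ) - 1) ^ s + (-1) ^ s * ((Fintype.card K : ℚ) - 1))
              / (Fintype.card K : ℚ) with hA
      set B := (((Fintype.card K : ℚ) - 1) ^ s - (-1) ^ s) / (Fintype.card K : ℚ) with hB
      have : ∀ u : Kˣ, (if β - u = 0 then A else B)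
          = B + (if u = Units.mk0 β h then A - B else 0) := by
        intro u
        rw [if_congr (key u) rfl rfl]
        split_ifs <;> ring
      rw [Finset.sum_congr rfl fun u _ => this u, Finset.sum_add_distrib,
        Finset.sum_ite_eq' univ (Units.mk0 β h), if_pos (mem_univ _),
        Finset.sum_const, card_univ, nsmul_eq_mul, hcu, hA, hB]
      field_simp
      ring

lemma sumCount_aFactor {q : ℕ} (hq : Fintype.card K = q) (s : ℕ) (β : K)
    (P : Prop) [Decidable P] (hP : P ↔ β = 0) :
    (sumCount K s β : ℚ) = aFactor q s P := by
  have hq2 : 2 ≤ q := hq ▸ Fintype.one_lt_card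
  have hq0 : (q : ℚ) ≠ 0 := by positivity
  rw [sumCount_cast, hq, aFactor]
  by_cases hp : P
  · rw [if_pos ((hP.mp hp)), if_pos hp]
    rcases Nat.eq_zero_or_pos s with hs | hs
    · subst hs
      rw [if_pos rfl]
      field_simp
      ring
    · rw [if_neg (by omega : ¬ s = 0)]
      obtain ⟨t, rfl⟩ : ∃ t, s = t + 1 := ⟨s - 1, by omega⟩
      have : t + 1 - 1 = t := rfl
      rw [this]
      field_simp
      ring
  · rw [if_neg (fun h => hp (hP.mpr h)), if_neg hp]
    ring

lemma card_sum_tuples (ι : Type*) [Fintype ι] [DecidableEq ι] (β : K) :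
    Fintype.card {d : ι → Kˣ // ∑ i, ((d i : K)) = β}
      = sumCount K (Fintype.card ι) β := by
  rw [sumCount]
  apply Fintype.card_congr
  refine Equiv.subtypeEquiv (Equiv.arrowCongr (Fintype.equivFin ι) (Equiv.refl Kˣ)) ?_
  intro d
  have h : ∑ i : ι, ((d i : K))
      = ∑ j : Fin (Fintype.card ι),
          ((((Fintype.equivFin ι).arrowCongr (Equiv.refl Kˣ)) d j : K)) := by
    refine Fintype.sum_equiv (Fintype.equivFin ι) _ _ fun i => ?_
    simp [Equiv.arrowCongr]
  rw [h]

end AuxFieldCount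

theorem stmt10 (p a b k : ℕ) (hp : p.Prime) (ha : 0 < a) (hb : 1 < b)
    (hk : p ^ (a * b) - 1 = k * (b * (p ^ a - 1)))
    (F : Type*) [Field F] [Fintype F] [DecidableEq F]
    (hF : Fintype.card F = p ^ (a * b))
    (K : Type*) [Field K] [Fintype K] [DecidableEq K] [Algebra K F]
    (hK : Fintype.card K = p ^ a)
    (ω : Fˣ) (hω : ∀ z : Fˣ, z ∈ Subgroup.zpowers ω)
    (bas : Module.Basis (Fin b) K F) (hbas : ∀ i : Fin b, bas i = (ω : F) ^ ((i : ℕ) * k))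
    (α : F) (r : ℕ) (hr : 0 < r) :
    (Fintype.card {v : Fin r → Fˣ // ∑ i, ((v i : F)) ^ k = α} : ℚ)
      = (k : ℚ) ^ r *
          ∑ c ∈ Finset.Nat.antidiagonalTuple b r,
            (Nat.multinomial Finset.univ c : ℚ) *
              ∏ i, aFactor (p ^ a) (c i) (bas.repr α i = 0) := by
  classical
  have hq2 : 2 ≤ p ^ a := Nat.one_lt_pow ha.ne' hp.one_lt
  have hQ2 : 2 ≤ p ^ (a * b) := Nat.one_lt_pow (by positivity) hp.one_lt
  have hbq1 : 0 < b * (p ^ a - 1) := Nat.mul_pos (by omega) (by omega)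
  have hk0 : 0 < k := by
    rcases Nat.eq_zero_or_pos k with h | h
    · subst h; simp at hk; omega
    · exact h
  have hcardU : Fintype.card Fˣ = k * (b * (p ^ a - 1)) := by
    rw [Fintype.card_units, hF, hk]
  have hωord : orderOf ω = k * (b * (p ^ a - 1)) := by
    rw [orderOf_eq_card_of_forall_mem_zpowers hω, Nat.card_eq_fintype_card, hcardU]
  have hωpow : ∀ t : Fˣ, ∃ n : ℕ, ω ^ n = t := by
    intro t
    obtain ⟨n, hn⟩ := (mem_powers_iff_mem_zpowers).mpr (hω t)
    exact ⟨n, hn⟩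
  -- the kernel of the k-th power map has exactly k elements
  have hker : Fintype.card {t : Fˣ // t ^ k = 1} = k := by
    set ζ := ω ^ (b * (p ^ a - 1)) with hζdef
    have hζk : ζ ^ k = 1 := by
      rw [hζdef, ← pow_mul, mul_comm, ← hωord, pow_orderOf_eq_one]
    have hiff : ∀ t : Fˣ, t ^ k = 1 ↔ t ∈ Subgroup.zpowers ζ := by
      intro t
      constructor
      · intro ht
        obtain ⟨n, rfl⟩ := hωpow t
        have h1 : orderOf ω ∣ n * k := by
          apply orderOf_dvd_of_pow_eq_one
          rwa [pow_mul]
        rw [hωord] at h1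
        have h2 : b * (p ^ a - 1) ∣ n := by
          have h3 : (b * (p ^ a - 1)) * k ∣ n * k := by
            rwa [mul_comm k (b * (p ^ a - 1))] at h1
          exact (Nat.mul_dvd_mul_iff_right hk0).mp h3
        obtain ⟨m, rfl⟩ := h2
        rw [pow_mul]
        exact ⟨(m : ℤ), (zpow_natCast ζ m).symm ▸ rfl⟩
      · rintro ⟨m, rfl⟩
        rw [← zpow_natCast, ← zpow_mul, mul_comm, zpow_mul, zpow_natCast, hζk, one_zpow]
    have hcc : Fintype.card {t : Fˣ // t ^ k = 1}
        = Fintype.card (Subgroup.zpowers ζ) :=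
      Fintype.card_congr (Equiv.subtypeEquivRight hiff)
    have hgcd : (k * (b * (p ^ a - 1))).gcd (b * (p ^ a - 1)) = b * (p ^ a - 1) :=
      Nat.gcd_eq_right (dvd_mul_left _ k)
    rw [hcc, Fintype.card_zpowers, hζdef, orderOf_pow, hωord, hgcd,
      Nat.mul_div_cancel _ hbq1]
  -- every fiber of the k-th power map over its range has k elements
  have hfiber : ∀ y : Fˣ, (∃ x : Fˣ, x ^ k = y) →
      Fintype.card {x : Fˣ // x ^ k = y} = k := by
    rintro y ⟨x₀, rfl⟩
    have hcc : Fintype.card {x : Fˣ // x ^ k = x₀ ^ k}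
        = Fintype.card {t : Fˣ // t ^ k = 1} := by
      apply Fintype.card_congr
      refine ⟨fun x => ⟨x₀⁻¹ * x.1, ?_⟩, fun t => ⟨x₀ * t.1, ?_⟩, ?_, ?_⟩
      · rw [mul_pow, x.2, inv_pow, inv_mul_cancel]
      · rw [mul_pow, t.2, mul_one]
      · rintro ⟨x, hx⟩
        apply Subtype.ext
        simp
      · rintro ⟨t, ht⟩
        apply Subtype.ext
        simp
    rw [hcc, hker]
  -- Step 1 : extract the factor k^r
  have step1 : Fintype.card {v : Fin r → Fˣ // ∑ i, ((v i : F)) ^ k = α}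
      = k ^ r * Fintype.card {w : Fin r → Fˣ //
          (∀ i, ∃ x : Fˣ, x ^ k = w i) ∧ ∑ i, ((w i : F)) = α} := by
    set A := {w : Fin r → Fˣ // (∀ i, ∃ x : Fˣ, x ^ k = w i) ∧ ∑ i, ((w i : F)) = α}
      with hA
    set S := {v : Fin r → Fˣ // ∑ i, ((v i : F)) ^ k = α} with hS
    have hval : ∀ (v : Fin r → Fˣ) (i : Fin r), ((v i ^ k : Fˣ) : F) = ((v i : F)) ^ k :=
      fun v i => Units.val_pow_eq_pow_val _ _
    let Φ : S → A := fun v => ⟨fun i => v.1 i ^ k,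
      fun i => ⟨v.1 i, rfl⟩,
      by simp only [Units.val_pow_eq_pow_val]; exact v.2⟩
    have h1 : Fintype.card S = ∑ w : A, Fintype.card {v : S // Φ v = w} := by
      rw [← Fintype.card_sigma]
      exact (Fintype.card_congr (Equiv.sigmaFiberEquiv Φ)).symm
    have h2 : ∀ w : A, Fintype.card {v : S // Φ v = w} = k ^ r := by
      intro w
      have e1 : {v : S // Φ v = w} ≃ {u : Fin r → Fˣ // ∀ i, u i ^ k = w.1 i} := by
        refine ⟨fun v => ⟨v.1.1, fun i => ?_⟩, fun u => ⟨⟨u.1, ?_⟩, ?_⟩, ?_, ?_⟩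
        · exact congrFun (congrArg Subtype.val v.2) i
        · rw [show (∑ i, ((u.1 i : F)) ^ k) = ∑ i, ((w.1 i : F)) from
            Finset.sum_congr rfl fun i _ => by rw [← hval u.1 i, u.2 i]]
          exact w.2.2
        · exact Subtype.ext (funext fun i => by
            show u.1 i ^ k = w.1 i
            exact u.2 i)
        · rintro ⟨⟨v, hv⟩, h⟩
          rfl
        · rintro ⟨u, hu⟩
          rfl
      rw [Fintype.card_congr (e1.trans (Equiv.subtypePiEquivPi (p := fun (i : Fin r) (x : Fˣ) => x ^ k = w.1 i))), Fintype.card_pi]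
      rw [Finset.prod_congr rfl fun i _ => hfiber (w.1 i) (w.2.1 i)]
      rw [Finset.prod_const, card_univ, Fintype.card_fin]
    rw [h1, Finset.sum_congr rfl fun w _ => h2 w, Finset.sum_const, card_univ,
      smul_eq_mul, mul_comm]
  -- the parametrization of the range of the k-th power map
  let ψ : Kˣ × Fin b → Fˣ := fun ci =>
    (Units.map (algebraMap K F).toMonoidHom ci.1) * ω ^ ((ci.2 : ℕ) * k)
  have hψval : ∀ ci : Kˣ × Fin b, ((ψ ci : Fˣ) : F) = ((ci.1 : K)) • bas ci.2 := by
    rintro ⟨c, i⟩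
    show ((Units.map (algebraMap K F).toMonoidHom c : Fˣ) : F)
        * ((ω ^ ((i : ℕ) * k) : Fˣ) : F) = ((c : K)) • bas i
    rw [Units.coe_map, hbas i, Algebra.smul_def, Units.val_pow_eq_pow_val]
    rfl
  have hψinj : Function.Injective ψ := by
    rintro ⟨c₁, i₁⟩ ⟨c₂, i₂⟩ h
    have hval : ((c₁ : K)) • bas i₁ = ((c₂ : K)) • bas i₂ := by
      rw [← hψval ⟨c₁, i₁⟩, ← hψval ⟨c₂, i₂⟩, h]
    have hrep := congrArg bas.repr hval
    rw [map_smul, map_smul, Module.Basis.repr_self, Module.Basis.repr_self,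
      Finsupp.smul_single, Finsupp.smul_single, smul_eq_mul, smul_eq_mul,
      mul_one, mul_one] at hrep
    rcases (Finsupp.single_eq_single_iff _ _ _ _).mp hrep with ⟨h1, h2⟩ | ⟨h1, _⟩
    · exact Prod.ext (Units.ext h2) h1
    · exact absurd h1 c₁.ne_zero
  have hpow_of : ∀ u : Fˣ, u ^ (p ^ a - 1) = 1 → ∃ x : Fˣ, x ^ k = u := by
    intro u hu
    obtain ⟨n, rfl⟩ := hωpow u
    have h1 : orderOf ω ∣ n * (p ^ a - 1) := by
      apply orderOf_dvd_of_pow_eq_one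
      rwa [pow_mul]
    rw [hωord] at h1
    have h2 : (k * b) * (p ^ a - 1) ∣ n * (p ^ a - 1) := by
      rwa [← mul_assoc] at h1
    have h3 : k * b ∣ n := (Nat.mul_dvd_mul_iff_right (Nat.sub_pos_of_lt hq2)).mp h2
    have h4 : k ∣ n := dvd_trans (dvd_mul_right k b) h3
    obtain ⟨m, rfl⟩ := h4
    exact ⟨ω ^ m, by rw [← pow_mul, mul_comm]⟩
  have hψrange : ∀ ci : Kˣ × Fin b, ∃ x : Fˣ, x ^ k = ψ ci := by
    rintro ⟨c, i⟩
    have hc : (Units.map (algebraMap K F).toMonoidHom c) ^ (p ^ a - 1) = 1 := by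
      rw [← map_pow]
      have : c ^ (p ^ a - 1) = 1 := by
        have hcard : Fintype.card Kˣ = p ^ a - 1 := by
          rw [Fintype.card_units, hK]
        rw [← hcard, pow_card_eq_one]
      rw [this, map_one]
    obtain ⟨x₁, hx₁⟩ := hpow_of _ hc
    refine ⟨x₁ * ω ^ (i : ℕ), ?_⟩
    rw [mul_pow, hx₁, ← pow_mul]
  -- the range of the k-th power map
  let R := {y : Fˣ // ∃ x : Fˣ, x ^ k = y}
  have hcardR : Fintype.card R * k = k * (b * (p ^ a - 1)) := by
    let π : Fˣ → R := fun x => ⟨x ^ k, x, rfl⟩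
    have h1 : Fintype.card Fˣ = ∑ y : R, Fintype.card {x : Fˣ // π x = y} := by
      rw [← Fintype.card_sigma]
      exact (Fintype.card_congr (Equiv.sigmaFiberEquiv π)).symm
    have h2 : ∀ y : R, Fintype.card {x : Fˣ // π x = y} = k := by
      intro y
      have e2 : {x : Fˣ // π x = y} ≃ {x : Fˣ // x ^ k = y.1} :=
        Equiv.subtypeEquivRight fun x => by
          constructor
          · intro h; exact congrArg Subtype.val h
          · intro h; exact Subtype.ext h
      rw [Fintype.card_congr e2]
      exact hfiber y.1 y.2
    rw [← hcardU, h1, Finset.sum_congr rfl fun y _ => h2 y, Finset.sum_const,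
      card_univ, smul_eq_mul]
  have hcardR' : Fintype.card R = b * (p ^ a - 1) := by
    apply Nat.eq_of_mul_eq_mul_right hk0
    rw [hcardR, mul_comm]
  let ψ' : Kˣ × Fin b → R := fun ci => ⟨ψ ci, hψrange ci⟩
  have hψ'bij : Function.Bijective ψ' := by
    rw [Fintype.bijective_iff_injective_and_card]
    constructor
    · intro x y h
      exact hψinj (congrArg Subtype.val h)
    · rw [Fintype.card_prod, Fintype.card_units, hK, Fintype.card_fin, hcardR',
        mul_comm]
  let e : (Kˣ × Fin b) ≃ R := Equiv.ofBijective ψ' hψ'bij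
  have heval : ∀ ci : Kˣ × Fin b, ((e ci : R) : Fˣ) = ψ ci := fun ci => rfl
  -- Step 2 : reparametrize
  have step2 : Fintype.card {w : Fin r → Fˣ //
        (∀ i, ∃ x : Fˣ, x ^ k = w i) ∧ ∑ i, ((w i : F)) = α}
      = Fintype.card {u : Fin r → Kˣ × Fin b //
          ∑ j, (((u j).1 : K)) • bas ((u j).2) = α} := by
    apply Fintype.card_congr
    symm
    refine ⟨fun u => ⟨fun j => ψ (u.1 j), fun j => hψrange _, ?_⟩,
            fun w => ⟨fun j => e.symm ⟨w.1 j, w.2.1 j⟩, ?_⟩, ?_, ?_⟩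
    · rw [Finset.sum_congr rfl fun j _ => hψval (u.1 j)]
      exact u.2
    · have hval : ∀ j, (((e.symm ⟨w.1 j, w.2.1 j⟩ : Kˣ × Fin b).1 : K))
          • bas ((e.symm ⟨w.1 j, w.2.1 j⟩ : Kˣ × Fin b).2)
          = ((w.1 j : F)) := by
        intro j
        rw [← hψval, ← heval (e.symm ⟨w.1 j, w.2.1 j⟩), e.apply_symm_apply]
      rw [Finset.sum_congr rfl fun j _ => hval j]
      exact w.2.2
    · rintro ⟨u, hu⟩
      apply Subtype.ext
      funext j
      show e.symm ⟨ψ (u j), _⟩ = u j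
      rw [show (⟨ψ (u j), hψrange (u j)⟩ : R) = e (u j) from Subtype.ext rfl,
        e.symm_apply_apply]
    · rintro ⟨w, hw⟩
      apply Subtype.ext
      funext j
      show ψ (e.symm ⟨w j, _⟩) = w j
      rw [← heval (e.symm ⟨w j, hw.1 j⟩), e.apply_symm_apply]
  -- Step 3 : rewrite the sum condition in coordinates
  have hcond : ∀ u : Fin r → Kˣ × Fin b,
      (∑ j, (((u j).1 : K)) • bas ((u j).2) = α)
        ↔ ∀ i, (∑ j, if (u j).2 = i then (((u j).1 : K)) else 0) = bas.repr α i := by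
    intro u
    have hrepr : ∀ i, bas.repr (∑ j, (((u j).1 : K)) • bas ((u j).2)) i
        = ∑ j, if (u j).2 = i then (((u j).1 : K)) else 0 := by
      intro i
      rw [map_sum, Finsupp.finset_sum_apply]
      refine Finset.sum_congr rfl fun j _ => ?_
      rw [map_smul, Module.Basis.repr_self, Finsupp.smul_single, smul_eq_mul, mul_one,
        Finsupp.single_apply]
    constructor
    · intro h i
      rw [← hrepr i, h]
    · intro h
      apply bas.repr.injective
      ext i
      rw [hrepr i, h i]
  have step3 : Fintype.card {u : Fin r → Kˣ × Fin b //
        ∑ j, (((u j).1 : K)) • bas ((u j).2) = α}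
      = ∑ f : Fin r → Fin b,
          ∏ i, sumCount K #(univ.filter fun j => f j = i) (bas.repr α i) := by
    rw [Fintype.card_congr (Equiv.subtypeEquivRight hcond)]
    -- split into the Fin b component and the Kˣ component
    have E5 : {u : Fin r → Kˣ × Fin b //
          ∀ i, (∑ j, if (u j).2 = i then (((u j).1 : K)) else 0) = bas.repr α i}
        ≃ Σ f : Fin r → Fin b, {c : Fin r → Kˣ //
            ∀ i, (∑ j, if f j = i then ((c j : K)) else 0) = bas.repr α i} :=
      ⟨fun u => ⟨fun j => (u.1 j).2, fun j => (u.1 j).1, u.2⟩,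
       fun s => ⟨fun j => (s.2.1 j, s.1 j), s.2.2⟩,
       fun u => rfl, fun s => rfl⟩
    rw [Fintype.card_congr E5, Fintype.card_sigma]
    refine Finset.sum_congr rfl fun f _ => ?_
    -- now split the condition over the fibers of f
    have hsub : ∀ (g : Fin r → K) (i : Fin b),
        (∑ j : {j : Fin r // f j = i}, g j.1) = ∑ j, if f j = i then g j else 0 := by
      intro g i
      rw [← Finset.sum_filter]
      exact (Finset.sum_subtype (univ.filter fun j => f j = i) (by simp) g).symm
    have E6 : {c : Fin r → Kˣ //
          ∀ i, (∑ j, if f j = i then ((c j : K)) else 0) = bas.repr α i}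
        ≃ ∀ i : Fin b, {d : {j : Fin r // f j = i} → Kˣ //
            ∑ j, ((d j : K)) = bas.repr α i} := by
      refine ⟨fun c => fun i => ⟨fun j => c.1 j.1, ?_⟩,
              fun d => ⟨fun j => (d (f j)).1 ⟨j, rfl⟩, ?_⟩, ?_, ?_⟩
      · rw [hsub (fun j => ((c.1 j : K))) i]
        exact c.2 i
      · intro i
        rw [← hsub (fun j => (((d (f j)).1 ⟨j, rfl⟩ : Kˣ) : K)) i]
        have : ∀ j : {j : Fin r // f j = i},
            (((d (f j.1)).1 ⟨j.1, rfl⟩ : Kˣ) : K) = (((d i).1 j : Kˣ) : K) := by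
          rintro ⟨j, hj⟩
          subst hj
          rfl
        rw [Finset.sum_congr rfl fun j _ => this j]
        exact (d i).2
      · rintro ⟨c, hc⟩
        rfl
      · intro d
        funext i
        apply Subtype.ext
        funext j
        obtain ⟨j, hj⟩ := j
        subst hj
        rfl
    rw [Fintype.card_congr E6, Fintype.card_pi]
    refine Finset.prod_congr rfl fun i _ => ?_
    rw [card_sum_tuples, Fintype.card_subtype]
  -- Final assembly
  rw [step1, step2, step3]
  push_cast
  congr 1
  have hmem : ∀ f : Fin r → Fin b,
      (fun i => #(univ.filter fun j => f j = i)) ∈ Finset.Nat.antidiagonalTuple b r := by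
    intro f
    rw [Finset.Nat.mem_antidiagonalTuple]
    have := Finset.card_eq_sum_card_fiberwise
      (f := f) (s := univ) (t := univ) (fun x _ => mem_univ (f x))
    rw [card_univ, Fintype.card_fin] at this
    exact this.symm
  rw [← Finset.sum_fiberwise_of_maps_to (fun f _ => hmem f)
    (fun f => ∏ i, (sumCount K #(univ.filter fun j => f j = i) (bas.repr α i) : ℚ))]
  refine Finset.sum_congr rfl fun c hc => ?_
  have hcsum : ∑ i, c i = r := Finset.Nat.mem_antidiagonalTuple.mp hc
  have hinner : ∀ f ∈ univ.filter
      (fun f : Fin r → Fin b => (fun i => #(univ.filter fun j => f j = i)) = c),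
      (∏ i, (sumCount K #(univ.filter fun j => f j = i) (bas.repr α i) : ℚ))
        = ∏ i, aFactor (p ^ a) (c i) (bas.repr α i = 0) := by
    intro f hf
    have hfc := (Finset.mem_filter.mp hf).2
    refine Finset.prod_congr rfl fun i _ => ?_
    rw [congrFun hfc i]
    exact sumCount_aFactor K hK (c i) (bas.repr α i) _ Iff.rfl
  rw [Finset.sum_congr rfl hinner, Finset.sum_const, nsmul_eq_mul]
  congr 1
  have hfilter : (univ.filter
      (fun f : Fin r → Fin b => (fun i => #(univ.filter fun j => f j = i)) = c))
      = (univ.filter (fun f : Fin r → Fin b =>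
          ∀ i, #(univ.filter fun j => f j = i) = c i)) := by
    apply Finset.filter_congr
    intro f _
    rw [funext_iff]
  rw [hfilter, ← Fintype.card_subtype, card_fibfun r c hcsum]
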